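/- Let d be a metric on (ℝ²_≤ ∖ Δ) ∪ {Δ}. Let α^(1), …, α^(N) and β^(1), …, β^(N) be finite signed persistence diagrams such that α := ∑_{k=1}^N α^(k) and β := ∑_{k=1}^N β^(k) are nonnegative (i.e. are finite persistence diagrams). Then W₁^d(α, β) ≤ ∑_{k=1}^N W₁^d(α^(k), β^(k)). In particular this applies when the α^(k), β^(k) are the graded persistence diagrams of α and β obtained by Möbius inversion of the graded rank functions. -/

import Mathlib

open scoped Classical ENNReal
open MeasureTheory Filter

noncomputable section

/-- Off-diagonal points of `ℝ²_≤`. -/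
abbrev Pt : Type := {p : ℝ × ℝ // p.1 < p.2}

/-- The quotient `(ℝ²_≤ ∖ Δ) ∪ {Δ}`: the diagonal is collapsed to the single
point `none`. -/
abbrev PtD : Type := Option Pt

/-- The rank "distance" formula on `ℝ²_≤`. -/
def drk (x y : ℝ × ℝ) : ℝ :=
  (x.2 - x.1) ^ 2 / 2 + (y.2 - y.1) ^ 2 / 2 - (max (min x.2 y.2 - max x.1 y.1) 0) ^ 2

/-- The dimension "distance" formula on `ℝ²_≤` (length of the symmetric
difference of the intervals `[x₁,x₂]` and `[y₁,y₂]`). -/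
def ddim (x y : ℝ × ℝ) : ℝ :=
  (x.2 - x.1) + (y.2 - y.1) - 2 * max (min x.2 y.2 - max x.1 y.1) 0

/-- `d_rk` on the quotient `(ℝ²_≤ ∖ Δ) ∪ {Δ}`, with `d_rk(x,Δ) = ½(x₂−x₁)²`. -/
def drkQ : PtD → PtD → ℝ
  | Option.some x, Option.some y => drk x.1 y.1
  | Option.some x, Option.none => (x.1.2 - x.1.1) ^ 2 / 2
  | Option.none, Option.some y => (y.1.2 - y.1.1) ^ 2 / 2
  | Option.none, Option.none => 0

/-- `d_dim` on the quotient `(ℝ²_≤ ∖ Δ) ∪ {Δ}`, with `d_dim(x,Δ) = x₂−x₁`. -/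
def ddimQ : PtD → PtD → ℝ
  | Option.some x, Option.some y => ddim x.1 y.1
  | Option.some x, Option.none => x.1.2 - x.1.1
  | Option.none, Option.some y => y.1.2 - y.1.1
  | Option.none, Option.none => 0

/-- The cost of the coupling between finite diagrams `α` and `β` determined by
the multiset `m` of matched pairs: matched pairs pay `d` between themselves,
and every unmatched point of `α` or `β` is matched with the diagonal `Δ`. -/
def cost (d : PtD → PtD → ℝ) (α β : Multiset Pt) (m : Multiset (Pt × Pt)) : ℝ :=
  (m.map fun p => d (some p.1) (some p.2)).sum
    + ((α - m.map Prod.fst).map fun x => d (some x) none).sum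
    + ((β - m.map Prod.snd).map fun y => d none (some y)).sum

/-- The 1-Wasserstein distance between finite persistence diagrams with ground
metric `d`: the infimum of the costs of all couplings. -/
def W1fin (d : PtD → PtD → ℝ) (α β : Multiset Pt) : ℝ :=
  sInf {c : ℝ | ∃ m : Multiset (Pt × Pt),
    m.map Prod.fst ≤ α ∧ m.map Prod.snd ≤ β ∧ c = cost d α β m}

/-- The tent function `tent_x(t) = max(0, min(t−x₁, x₂−t))`. -/
def tent (x : Pt) (t : ℝ) : ℝ := max 0 (min (t - x.1.1) (x.1.2 - t))

/-- The persistence landscape `λ_α(k,t)`: the `k`-th largest element of the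
multiset `{tent_x(t) : x ∈ α}` (and `0` if `α` has fewer than `k` elements). -/
def landscape (α : Multiset Pt) (k : ℕ) (t : ℝ) : ℝ :=
  sSup {h : ℝ | 0 < h ∧ k ≤ Multiset.card (α.filter fun x => h ≤ tent x t)}

/-- `‖Λα − Λβ‖₁ = ∑_{k ≥ 1} ∫ |λ_α(k,t) − λ_β(k,t)| dt`. -/
def lambdaDistFin (α β : Multiset Pt) : ℝ :=
  ∑' k : ℕ, ∫ t : ℝ, |landscape α (k + 1) t - landscape β (k + 1) t|

/-- The finite persistence diagram (multiset) underlying the positive part of a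
finite signed persistence diagram `σ : Pt →₀ ℤ`: the point `p` occurs with
multiplicity `max(σ(p), 0)`. -/
def posMult (σ : Pt →₀ ℤ) : Multiset Pt :=
  Finsupp.toMultiset (σ.mapRange Int.toNat Int.toNat_zero)

/-- The 1-Wasserstein distance between finite signed persistence diagrams:
`W₁^d(σ, τ) := W₁^d(σ₊ + τ₋, τ₊ + σ₋)`. -/
def W1signed (d : PtD → PtD → ℝ) (σ τ : Pt →₀ ℤ) : ℝ :=
  W1fin d (posMult σ + posMult (-τ)) (posMult τ + posMult (-σ))


section AuxLemmas

variable (d : PtD → PtD → ℝ)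

lemma sum_map_nonneg' {γ : Type*} (f : γ → ℝ) (hf : ∀ a, 0 ≤ f a) (s : Multiset γ) :
    0 ≤ (s.map f).sum :=
  Multiset.sum_nonneg (fun r hr => by
    obtain ⟨a, _, rfl⟩ := Multiset.mem_map.1 hr; exact hf a)

lemma cost_nonneg (hd0 : ∀ u v, 0 ≤ d u v) (α β : Multiset Pt) (m : Multiset (Pt × Pt)) :
    0 ≤ cost d α β m := by
  have h1 := sum_map_nonneg' (fun p : Pt × Pt => d (some p.1) (some p.2)) (fun a => hd0 _ _) m
  have h2 := sum_map_nonneg' (fun x : Pt => d (some x) none) (fun a => hd0 _ _)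
    (α - m.map Prod.fst)
  have h3 := sum_map_nonneg' (fun y : Pt => d none (some y)) (fun a => hd0 _ _)
    (β - m.map Prod.snd)
  unfold cost; linarith

lemma cset_nonempty (α β : Multiset Pt) :
    {c : ℝ | ∃ m : Multiset (Pt × Pt),
      m.map Prod.fst ≤ α ∧ m.map Prod.snd ≤ β ∧ c = cost d α β m}.Nonempty :=
  ⟨cost d α β 0, 0, by simp, by simp, rfl⟩

lemma cset_bdd (hd0 : ∀ u v, 0 ≤ d u v) (α β : Multiset Pt) :
    BddBelow {c : ℝ | ∃ m : Multiset (Pt × Pt),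
      m.map Prod.fst ≤ α ∧ m.map Prod.snd ≤ β ∧ c = cost d α β m} :=
  ⟨0, by rintro c ⟨m, _, _, rfl⟩; exact cost_nonneg d hd0 α β m⟩

lemma W1fin_le_cost (hd0 : ∀ u v, 0 ≤ d u v) (α β : Multiset Pt) (m : Multiset (Pt × Pt))
    (h1 : m.map Prod.fst ≤ α) (h2 : m.map Prod.snd ≤ β) :
    W1fin d α β ≤ cost d α β m :=
  csInf_le (cset_bdd d hd0 α β) ⟨m, h1, h2, rfl⟩

lemma le_W1fin {b : ℝ} (α β : Multiset Pt)
    (h : ∀ m : Multiset (Pt × Pt), m.map Prod.fst ≤ α → m.map Prod.snd ≤ β →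
      b ≤ cost d α β m) : b ≤ W1fin d α β :=
  le_csInf (cset_nonempty d α β) (by rintro c ⟨m, h1, h2, rfl⟩; exact h m h1 h2)

lemma msub_add (α1 α2 s1 s2 : Multiset Pt) (h1 : s1 ≤ α1) (h2 : s2 ≤ α2) :
    (α1 + α2) - (s1 + s2) = (α1 - s1) + (α2 - s2) := by
  refine Multiset.ext.2 fun a => ?_
  have e1 := Multiset.le_iff_count.1 h1 a
  have e2 := Multiset.le_iff_count.1 h2 a
  simp only [Multiset.count_sub, Multiset.count_add]
  omega

lemma cost_add (α1 α2 β1 β2 : Multiset Pt) (m1 m2 : Multiset (Pt × Pt))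
    (ha1 : m1.map Prod.fst ≤ α1) (hb1 : m1.map Prod.snd ≤ β1)
    (ha2 : m2.map Prod.fst ≤ α2) (hb2 : m2.map Prod.snd ≤ β2) :
    cost d (α1 + α2) (β1 + β2) (m1 + m2) = cost d α1 β1 m1 + cost d α2 β2 m2 := by
  unfold cost
  simp only [Multiset.map_add]
  rw [msub_add α1 α2 _ _ ha1 ha2, msub_add β1 β2 _ _ hb1 hb2]
  simp only [Multiset.map_add, Multiset.sum_add]
  ring

lemma W1fin_add_le (hd0 : ∀ u v, 0 ≤ d u v) (α1 α2 β1 β2 : Multiset Pt) :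
    W1fin d (α1 + α2) (β1 + β2) ≤ W1fin d α1 β1 + W1fin d α2 β2 := by
  have key : ∀ m1 : Multiset (Pt × Pt), m1.map Prod.fst ≤ α1 → m1.map Prod.snd ≤ β1 →
      ∀ m2 : Multiset (Pt × Pt), m2.map Prod.fst ≤ α2 → m2.map Prod.snd ≤ β2 →
      W1fin d (α1 + α2) (β1 + β2) ≤ cost d α1 β1 m1 + cost d α2 β2 m2 := by
    intro m1 ha1 hb1 m2 ha2 hb2
    rw [← cost_add d α1 α2 β1 β2 m1 m2 ha1 hb1 ha2 hb2]
    refine W1fin_le_cost d hd0 _ _ _ ?_ ?_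
    · rw [Multiset.map_add]; exact add_le_add ha1 ha2
    · rw [Multiset.map_add]; exact add_le_add hb1 hb2
  have h2 : ∀ m1 : Multiset (Pt × Pt), m1.map Prod.fst ≤ α1 → m1.map Prod.snd ≤ β1 →
      W1fin d (α1 + α2) (β1 + β2) - cost d α1 β1 m1 ≤ W1fin d α2 β2 :=
    fun m1 ha1 hb1 => le_W1fin d α2 β2 (fun m2 ha2 hb2 => by
      have := key m1 ha1 hb1 m2 ha2 hb2; linarith)
  have h3 : W1fin d (α1 + α2) (β1 + β2) - W1fin d α2 β2 ≤ W1fin d α1 β1 :=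
    le_W1fin d α1 β1 (fun m1 ha1 hb1 => by have := h2 m1 ha1 hb1; linarith)
  linarith

lemma W1fin_sum_le {ι : Type*} (hd0 : ∀ u v, 0 ≤ d u v) (s : Finset ι)
    (f g : ι → Multiset Pt) :
    W1fin d (∑ i ∈ s, f i) (∑ i ∈ s, g i) ≤ ∑ i ∈ s, W1fin d (f i) (g i) := by
  classical
  induction s using Finset.induction with
  | empty =>
      simp only [Finset.sum_empty]
      have h0 : cost d 0 0 0 = 0 := by simp [cost]
      have := W1fin_le_cost d hd0 0 0 0 (by simp) (by simp)
      rw [h0] at this; exact this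
  | insert _ _ hnot ih =>
      rw [Finset.sum_insert hnot, Finset.sum_insert hnot, Finset.sum_insert hnot]
      exact le_trans (W1fin_add_le d hd0 _ _ _ _) (by linarith)

lemma cons_sub_cons' (x : Pt) (s t : Multiset Pt) : (x ::ₘ s) - (x ::ₘ t) = s - t := by
  refine Multiset.ext.2 fun a => ?_
  simp only [Multiset.count_sub, Multiset.count_cons]
  split_ifs <;> omega

lemma sub_cons_rev {s t : Multiset Pt} {z : Pt} (h : z ::ₘ t ≤ s) :
    s - t = z ::ₘ (s - (z ::ₘ t)) := by
  refine Multiset.ext.2 fun a => ?_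
  have hz := Multiset.le_iff_count.1 h a
  rw [Multiset.count_cons] at hz
  simp only [Multiset.count_sub, Multiset.count_cons]
  split_ifs at hz ⊢ <;> omega

lemma cons_sub_of_le' {s t : Multiset Pt} (x : Pt) (h : t ≤ s) :
    (x ::ₘ s) - t = x ::ₘ (s - t) := by
  refine Multiset.ext.2 fun a => ?_
  have hz := Multiset.le_iff_count.1 h a
  simp only [Multiset.count_sub, Multiset.count_cons]
  split_ifs <;> omega

lemma key_cancel (hd0 : ∀ u v, 0 ≤ d u v)
    (hdtri : ∀ u v w : PtD, d u w ≤ d u v + d v w)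
    (α β : Multiset Pt) (x : Pt) (m : Multiset (Pt × Pt))
    (h1 : m.map Prod.fst ≤ x ::ₘ α) (h2 : m.map Prod.snd ≤ x ::ₘ β) :
    ∃ m' : Multiset (Pt × Pt), m'.map Prod.fst ≤ α ∧ m'.map Prod.snd ≤ β ∧
      cost d α β m' ≤ cost d (x ::ₘ α) (x ::ₘ β) m := by
  classical
  have hc1 : ∀ a, (m.map Prod.fst).count a ≤ α.count a + (if a = x then 1 else 0) := by
    intro a
    have := Multiset.le_iff_count.1 h1 a
    rwa [Multiset.count_cons] at this
  have hc2 : ∀ a, (m.map Prod.snd).count a ≤ β.count a + (if a = x then 1 else 0) := by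
    intro a
    have := Multiset.le_iff_count.1 h2 a
    rwa [Multiset.count_cons] at this
  by_cases hx : (m.map Prod.fst).count x ≤ α.count x
  · have hfL : m.map Prod.fst ≤ α := by
      refine Multiset.le_iff_count.2 fun a => ?_
      have := hc1 a
      by_cases ha : a = x
      · subst ha; exact hx
      · simpa [ha] using this
    by_cases hy : (m.map Prod.snd).count x ≤ β.count x
    · -- case A : m itself works
      have hfR : m.map Prod.snd ≤ β := by
        refine Multiset.le_iff_count.2 fun a => ?_
        have := hc2 a
        by_cases ha : a = x
        · subst ha; exact hy
        · simpa [ha] using this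
      refine ⟨m, hfL, hfR, ?_⟩
      have e1 : (x ::ₘ α) - m.map Prod.fst = x ::ₘ (α - m.map Prod.fst) :=
        cons_sub_of_le' x hfL
      have e2 : (x ::ₘ β) - m.map Prod.snd = x ::ₘ (β - m.map Prod.snd) :=
        cons_sub_of_le' x hfR
      unfold cost
      rw [e1, e2, Multiset.map_cons, Multiset.map_cons, Multiset.sum_cons, Multiset.sum_cons]
      have t1 := hd0 (some x) none
      have t2 := hd0 none (some x)
      linarith
    · -- case B : the extra x on the right is matched by some pair (z, x) ∈ m
      push_neg at hy
      have hxmem : x ∈ m.map Prod.snd := Multiset.count_pos.1 (by omega)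
      obtain ⟨p, hp, hps⟩ := Multiset.mem_map.1 hxmem
      obtain ⟨z, x'⟩ := p
      rw [show x' = x from hps] at hp
      obtain ⟨m0, rfl⟩ := Multiset.exists_cons_of_mem hp
      have hm0f : m0.map Prod.fst ≤ α :=
        le_trans (by rw [Multiset.map_cons]; exact Multiset.le_cons_self _ _) hfL
      have hm0s : m0.map Prod.snd ≤ β := by
        rw [Multiset.map_cons] at h2
        exact (Multiset.cons_le_cons_iff x).1 h2
      refine ⟨m0, hm0f, hm0s, ?_⟩
      have hzc : z ::ₘ m0.map Prod.fst ≤ α := by rwa [Multiset.map_cons] at hfL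
      have eL1 : α - m0.map Prod.fst = z ::ₘ (α - (z ::ₘ m0.map Prod.fst)) := sub_cons_rev hzc
      have eL2 : (x ::ₘ α) - ((z, x) ::ₘ m0).map Prod.fst
          = x ::ₘ (α - (z ::ₘ m0.map Prod.fst)) := by
        rw [Multiset.map_cons]; exact cons_sub_of_le' x hzc
      have eR : (x ::ₘ β) - ((z, x) ::ₘ m0).map Prod.snd = β - m0.map Prod.snd := by
        rw [Multiset.map_cons]; exact cons_sub_cons' x _ _
      unfold cost
      rw [eL1, eL2, eR]
      simp only [Multiset.map_cons, Multiset.sum_cons]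
      have ht := hdtri (some z) (some x) none
      have t1 := hd0 (some z) (some x)
      linarith
  · by_cases hy : (m.map Prod.snd).count x ≤ β.count x
    · -- case C : the extra x on the left is matched by some pair (x, y) ∈ m
      push_neg at hx
      have hfR : m.map Prod.snd ≤ β := by
        refine Multiset.le_iff_count.2 fun a => ?_
        have := hc2 a
        by_cases ha : a = x
        · subst ha; exact hy
        · simpa [ha] using this
      have hxmem : x ∈ m.map Prod.fst := Multiset.count_pos.1 (by omega)
      obtain ⟨p, hp, hps⟩ := Multiset.mem_map.1 hxmem
      obtain ⟨x', y⟩ := p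
      rw [show x' = x from hps] at hp
      obtain ⟨m0, rfl⟩ := Multiset.exists_cons_of_mem hp
      have hm0f : m0.map Prod.fst ≤ α := by
        rw [Multiset.map_cons] at h1
        exact (Multiset.cons_le_cons_iff x).1 h1
      have hm0s : m0.map Prod.snd ≤ β :=
        le_trans (by rw [Multiset.map_cons]; exact Multiset.le_cons_self _ _) hfR
      refine ⟨m0, hm0f, hm0s, ?_⟩
      have hyc : y ::ₘ m0.map Prod.snd ≤ β := by rwa [Multiset.map_cons] at hfR
      have eR1 : β - m0.map Prod.snd = y ::ₘ (β - (y ::ₘ m0.map Prod.snd)) := sub_cons_rev hyc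
      have eR2 : (x ::ₘ β) - ((x, y) ::ₘ m0).map Prod.snd
          = x ::ₘ (β - (y ::ₘ m0.map Prod.snd)) := by
        rw [Multiset.map_cons]; exact cons_sub_of_le' x hyc
      have eL : (x ::ₘ α) - ((x, y) ::ₘ m0).map Prod.fst = α - m0.map Prod.fst := by
        rw [Multiset.map_cons]; exact cons_sub_cons' x _ _
      unfold cost
      rw [eR1, eR2, eL]
      simp only [Multiset.map_cons, Multiset.sum_cons]
      have ht := hdtri none (some x) (some y)
      have t1 := hd0 (some x) (some y)
      linarith
    · -- case D : the extra x is matched on both sides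
      push_neg at hx hy
      by_cases hxx : (x, x) ∈ m
      · -- D1 : the pair (x, x) itself is in m; drop it
        obtain ⟨m0, rfl⟩ := Multiset.exists_cons_of_mem hxx
        have hm0f : m0.map Prod.fst ≤ α := by
          rw [Multiset.map_cons] at h1
          exact (Multiset.cons_le_cons_iff x).1 h1
        have hm0s : m0.map Prod.snd ≤ β := by
          rw [Multiset.map_cons] at h2
          exact (Multiset.cons_le_cons_iff x).1 h2
        refine ⟨m0, hm0f, hm0s, ?_⟩
        have eL : (x ::ₘ α) - ((x, x) ::ₘ m0).map Prod.fst = α - m0.map Prod.fst := by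
          rw [Multiset.map_cons]; exact cons_sub_cons' x _ _
        have eR : (x ::ₘ β) - ((x, x) ::ₘ m0).map Prod.snd = β - m0.map Prod.snd := by
          rw [Multiset.map_cons]; exact cons_sub_cons' x _ _
        unfold cost
        rw [eL, eR]
        simp only [Multiset.map_cons, Multiset.sum_cons]
        have t1 := hd0 (some x) (some x)
        linarith
      · -- D2 : pairs (x, y) and (z, x) with y ≠ x, z ≠ x; reroute to (z, y)
        have hxmem1 : x ∈ m.map Prod.fst := Multiset.count_pos.1 (by omega)
        obtain ⟨p1, hp1, hp1s⟩ := Multiset.mem_map.1 hxmem1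
        obtain ⟨x', y⟩ := p1
        rw [show x' = x from hp1s] at hp1
        have hxmem2 : x ∈ m.map Prod.snd := Multiset.count_pos.1 (by omega)
        obtain ⟨p2, hp2, hp2s⟩ := Multiset.mem_map.1 hxmem2
        obtain ⟨z, x''⟩ := p2
        rw [show x'' = x from hp2s] at hp2
        have hzne : z ≠ x := fun h => hxx (h ▸ hp2)
        obtain ⟨m1, rfl⟩ := Multiset.exists_cons_of_mem hp1
        have hp2' : (z, x) ∈ m1 := by
          rcases Multiset.mem_cons.1 hp2 with h | h
          · exact absurd (congrArg Prod.fst h) hzne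
          · exact h
        obtain ⟨m0, rfl⟩ := Multiset.exists_cons_of_mem hp2'
        refine ⟨(z, y) ::ₘ m0, ?_, ?_, ?_⟩
        · rw [Multiset.map_cons]
          have : ((x, y) ::ₘ (z, x) ::ₘ m0).map Prod.fst
              = x ::ₘ z ::ₘ m0.map Prod.fst := by
            simp [Multiset.map_cons]
          rw [this] at h1
          exact (Multiset.cons_le_cons_iff x).1 h1
        · rw [Multiset.map_cons]
          have : ((x, y) ::ₘ (z, x) ::ₘ m0).map Prod.snd
              = x ::ₘ y ::ₘ m0.map Prod.snd := by
            simp [Multiset.map_cons, Multiset.cons_swap]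
          rw [this] at h2
          exact (Multiset.cons_le_cons_iff x).1 h2
        · have eL : (x ::ₘ α) - ((x, y) ::ₘ (z, x) ::ₘ m0).map Prod.fst
              = α - ((z, y) ::ₘ m0).map Prod.fst := by
            simp only [Multiset.map_cons]
            exact cons_sub_cons' x _ _
          have eR : (x ::ₘ β) - ((x, y) ::ₘ (z, x) ::ₘ m0).map Prod.snd
              = β - ((z, y) ::ₘ m0).map Prod.snd := by
            simp only [Multiset.map_cons]
            rw [show (y ::ₘ x ::ₘ m0.map Prod.snd) = x ::ₘ y ::ₘ m0.map Prod.snd from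
              Multiset.cons_swap _ _ _]
            exact cons_sub_cons' x _ _
          unfold cost
          rw [eL, eR]
          simp only [Multiset.map_cons, Multiset.sum_cons]
          have ht := hdtri (some z) (some x) (some y)
          linarith

lemma W1fin_le_cons (hd0 : ∀ u v, 0 ≤ d u v)
    (hdtri : ∀ u v w : PtD, d u w ≤ d u v + d v w) (α β : Multiset Pt) (x : Pt) :
    W1fin d α β ≤ W1fin d (x ::ₘ α) (x ::ₘ β) := by
  refine le_W1fin d _ _ fun m hm1 hm2 => ?_
  obtain ⟨m', ha, hb, hc⟩ := key_cancel d hd0 hdtri α β x m hm1 hm2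
  exact (W1fin_le_cost d hd0 α β m' ha hb).trans hc

lemma W1fin_le_add_right (hd0 : ∀ u v, 0 ≤ d u v)
    (hdtri : ∀ u v w : PtD, d u w ≤ d u v + d v w) (α β γ : Multiset Pt) :
    W1fin d α β ≤ W1fin d (α + γ) (β + γ) := by
  induction γ using Multiset.induction_on with
  | empty => simp
  | cons x γ ih =>
      rw [Multiset.add_cons, Multiset.add_cons]
      exact ih.trans (W1fin_le_cons d hd0 hdtri (α + γ) (β + γ) x)

lemma posMult_count (σ : Pt →₀ ℤ) (p : Pt) : (posMult σ).count p = (σ p).toNat := by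
  classical
  rw [posMult, Finsupp.count_toMultiset, Finsupp.mapRange_apply]

lemma posMult_sum (N : ℕ) (A : Fin N → (Pt →₀ ℤ)) (hA : ∀ p : Pt, 0 ≤ (∑ k, A k) p) :
    ∑ k, posMult (A k) = posMult (∑ k, A k) + ∑ k, posMult (-(A k)) := by
  classical
  refine Multiset.ext.2 fun p => ?_
  rw [Multiset.count_add, posMult_count, Multiset.count_sum', Multiset.count_sum']
  simp only [posMult_count, Finsupp.neg_apply]
  have hs : (∑ k, A k) p = ∑ k, (A k) p := Finsupp.finset_sum_apply _ _ _
  rw [hs]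
  have hA' : 0 ≤ ∑ k, (A k) p := hs ▸ hA p
  zify
  rw [Int.toNat_of_nonneg hA', ← Finset.sum_add_distrib]
  refine Finset.sum_congr rfl fun k _ => ?_
  omega

end AuxLemmas

/-- If the finite signed diagrams `α⁽¹⁾,…,α⁽ᴺ⁾` and `β⁽¹⁾,…,β⁽ᴺ⁾` sum to
nonnegative (i.e. honest) persistence diagrams `α` and `β`, then
`W₁^d(α, β) ≤ ∑_k W₁^d(α⁽ᵏ⁾, β⁽ᵏ⁾)`. -/
theorem stmt17 (d : PtD → PtD → ℝ)
    (hd0 : ∀ u v : PtD, 0 ≤ d u v)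
    (hdsymm : ∀ u v : PtD, d u v = d v u)
    (hdeq : ∀ u v : PtD, d u v = 0 ↔ u = v)
    (hdtri : ∀ u v w : PtD, d u w ≤ d u v + d v w)
    (N : ℕ) (A B : Fin N → (Pt →₀ ℤ))
    (hA : ∀ p : Pt, 0 ≤ (∑ k, A k) p) (hB : ∀ p : Pt, 0 ≤ (∑ k, B k) p) :
    W1fin d (posMult (∑ k, A k)) (posMult (∑ k, B k)) ≤
      ∑ k, W1signed d (A k) (B k) := by
  classical
  set MA : Multiset Pt := ∑ k, posMult (-(A k)) with hMA
  set MB : Multiset Pt := ∑ k, posMult (-(B k)) with hMB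
  have hAeq : ∑ k, (posMult (A k) + posMult (-(B k)))
      = posMult (∑ k, A k) + (MA + MB) := by
    rw [Finset.sum_add_distrib, posMult_sum N A hA, hMA, hMB, add_assoc]
  have hBeq : ∑ k, (posMult (B k) + posMult (-(A k)))
      = posMult (∑ k, B k) + (MA + MB) := by
    rw [Finset.sum_add_distrib, posMult_sum N B hB, hMA, hMB, add_assoc,
      add_comm MB MA]
  calc W1fin d (posMult (∑ k, A k)) (posMult (∑ k, B k))
      ≤ W1fin d (posMult (∑ k, A k) + (MA + MB)) (posMult (∑ k, B k) + (MA + MB)) :=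
        W1fin_le_add_right d hd0 hdtri _ _ _
    _ = W1fin d (∑ k, (posMult (A k) + posMult (-(B k))))
          (∑ k, (posMult (B k) + posMult (-(A k)))) := by rw [hAeq, hBeq]
    _ ≤ ∑ k, W1fin d (posMult (A k) + posMult (-(B k)))
          (posMult (B k) + posMult (-(A k))) := W1fin_sum_le d hd0 _ _ _
    _ = ∑ k, W1signed d (A k) (B k) := rfl

end
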